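/- Let D_i, D_j be symmetric n×n matrices, F an n×m matrix with F^T F = Id, and define the projected operators P_i = D_i (Id - F F^T) + F F^T and P_j = D_j (Id - F F^T) + F F^T. Then ‖D_i - D_j‖_F^2 - ‖P_i - P_j‖_F^2 = Trace(F^T (D_i - D_j)^2 F). -/
import Mathlib


open Matrix

theorem stmt_4 {n m : ℕ} (Di Dj : Matrix (Fin n) (Fin n) ℝ)
    (F : Matrix (Fin n) (Fin m) ℝ)
    (hDi : Diᵀ = Di) (hDj : Djᵀ = Dj) (hF : Fᵀ * F = 1) :
    ((Di - Dj)ᵀ * (Di - Dj)).trace -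
      (((Di * (1 - F * Fᵀ) + F * Fᵀ) - (Dj * (1 - F * Fᵀ) + F * Fᵀ))ᵀ *
        ((Di * (1 - F * Fᵀ) + F * Fᵀ) - (Dj * (1 - F * Fᵀ) + F * Fᵀ))).trace =
      (Fᵀ * ((Di - Dj) * (Di - Dj)) * F).trace := by
  set A := Di - Dj with hAdef
  have hA : Aᵀ = A := by simp [hAdef, transpose_sub, hDi, hDj]
  have hP : F * Fᵀ * (F * Fᵀ) = F * Fᵀ := by
    rw [Matrix.mul_assoc F, ← Matrix.mul_assoc Fᵀ, hF, Matrix.one_mul]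
  have hdiff : Di * (1 - F * Fᵀ) + F * Fᵀ - (Dj * (1 - F * Fᵀ) + F * Fᵀ)
      = A * (1 - F * Fᵀ) := by
    rw [hAdef, sub_mul]; abel
  rw [hdiff]
  have hQ : (1 - F * Fᵀ) * (1 - F * Fᵀ) = 1 - F * Fᵀ := by
    rw [one_sub_mul, mul_one_sub, hP]; abel
  have hQt : (1 - F * Fᵀ)ᵀ = 1 - F * Fᵀ := by
    simp [transpose_sub, transpose_mul]
  rw [transpose_mul, hQt, hA]
  have h1 : ((1 - F * Fᵀ) * A * (A * (1 - F * Fᵀ))).trace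
      = (A * A * (1 - F * Fᵀ)).trace := by
    rw [trace_mul_comm, mul_assoc, mul_assoc, ← mul_assoc (1 - F * Fᵀ), hQ,
      ← mul_assoc, ← mul_assoc, trace_mul_comm, ← mul_assoc]
  rw [h1, mul_one_sub (A * A), trace_sub,
    show A * A * (F * Fᵀ) = (A * A * F) * Fᵀ from (Matrix.mul_assoc _ _ _).symm,
    trace_mul_comm (A * A * F) Fᵀ, ← Matrix.mul_assoc, ← Matrix.mul_assoc]
  ring
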